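/- Let k be a field of characteristic 0 and E a free k[[t]]-module with logarithmic connection ∇ whose residue Res_E(∇) has eigenvalue set S. Define a partial order on S by α < β iff β − α ∈ ℤ_{>0}, and set ρ(E) := max{β − α : α ≤ β in S} (a non-negative integer). If ρ(E) > 0, let V ⊂ E_0 be the k-subspace corresponding to the sum of generalized eigenspaces of eigenvalues β ∈ S that are maximal and dominate some α < β, let E^{(1)} = t^{-1}E, identify E^{(1)}_0 ≅ E_0, and let E^{(2)} = ker(E^{(1)} → E^{(1)}_0/V^{(1)}). Then ∇ is logarithmic on E^{(2)} and ρ(E^{(2)}) ≤ ρ(E) − 1. -/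

import Mathlib

/-!
Statement 9 (the inductive step in the proof of Lemma `07.12.25.1` of the paper).

`E` is a free `k[[t]]`-module (`char k = 0`) with logarithmic connection; in a frame adapted
at `t = 0` to the subspace `V ⊆ E₀` (so that `V` is the span of the first `m` coordinate
vectors), `t∇(∂_t)` has matrix `A ∈ M_r(k[[t]])` with residue `A₀ = A(0)`.  Let `S ⊆ k̄` be
the eigenvalue set of `A₀`, ordered by `α < β ↔ β − α ∈ ℤ_{>0}`, let `S₀` be the set of
eigenvalues that are maximal and dominate some smaller eigenvalue, and assume `V ⊗ k̄` is the
sum of the generalized eigenspaces of the eigenvalues in `S₀`.  Let `ρ > 0` be the maximal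
integer difference of comparable eigenvalues.  The elementary modification
`E⁽²⁾ = ker(t⁻¹E → (t⁻¹E)₀/V)` has adapted frame `(t⁻¹e_1,…,t⁻¹e_m,e_{m+1},…,e_r)`, i.e. new
connection matrix `A' = P⁻¹AP + P⁻¹(t∂_t P)` for `P = diag(t⁻¹,…,t⁻¹,1,…,1)`.  Conclusion:
`∇` is logarithmic on `E⁽²⁾` (`A'` has entries in `k[[t]]`) and `ρ(E⁽²⁾) ≤ ρ(E) − 1`.
-/

noncomputable section

open PowerSeries Classical

open Polynomial Matrix in
lemma isRoot_charpoly_iff_det {F : Type*} [Field F] {n : Type*} [Fintype n] [DecidableEq n]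
    (M : Matrix n n F) (μ : F) :
    M.charpoly.IsRoot μ ↔ (Matrix.diagonal (fun _ => μ) - M).det = 0 := by
  have h : M.charpoly.eval μ = (Matrix.diagonal (fun _ => μ) - M).det := by
    rw [Matrix.charpoly, show (M.charmatrix.det).eval μ = (Polynomial.evalRingHom μ) M.charmatrix.det from rfl,
      RingHom.map_det]
    congr 1
    ext i j
    by_cases hij : i = j <;>
      simp [hij, Matrix.charmatrix_apply, Matrix.diagonal_apply, Matrix.sub_apply]
  rw [Polynomial.IsRoot, h]

open Polynomial Matrix in
lemma isRoot_charpoly_iff_exists_mulVec {F : Type*} [Field F] {n : Type*} [Fintype n] [DecidableEq n]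
    (M : Matrix n n F) (μ : F) :
    M.charpoly.IsRoot μ ↔ ∃ v : n → F, v ≠ 0 ∧ M *ᵥ v = μ • v := by
  rw [isRoot_charpoly_iff_det, ← Matrix.exists_mulVec_eq_zero_iff]
  constructor
  · rintro ⟨v, hv, h0⟩
    refine ⟨v, hv, ?_⟩
    rw [Matrix.sub_mulVec] at h0
    have := sub_eq_zero.mp h0
    rw [← this]
    funext i
    simp [Matrix.mulVec_diagonal]
  · rintro ⟨v, hv, h0⟩
    refine ⟨v, hv, ?_⟩
    rw [Matrix.sub_mulVec, h0]
    funext i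
    simp [Matrix.mulVec_diagonal]

lemma det_split_blocks {F : Type*} [CommRing F] {p q r : ℕ} (e : Fin p ⊕ Fin q ≃ Fin r)
    (M : Matrix (Fin r) (Fin r) F)
    (h : ∀ a b, M (e (Sum.inl a)) (e (Sum.inr b)) = 0) :
    M.det = (Matrix.of fun a a' => M (e (Sum.inl a)) (e (Sum.inl a'))).det *
            (Matrix.of fun b b' => M (e (Sum.inr b)) (e (Sum.inr b'))).det := by
  rw [← Matrix.det_submatrix_equiv_self e M, ← Matrix.fromBlocks_toBlocks (M.submatrix e e)]
  have h12 : (M.submatrix e e).toBlocks₁₂ = 0 := by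
    ext a b; exact h a b
  rw [h12, Matrix.det_fromBlocks_zero₁₂]
  rfl


theorem hecke_modification_decreases_rho
    (k : Type) [Field k] [CharZero k] (r m : ℕ) (hm : m ≤ r) (hm0 : 0 < m)
    (A : Matrix (Fin r) (Fin r) (PowerSeries k)) :
    let kb := AlgebraicClosure k
    let A₀ : Matrix (Fin r) (Fin r) kb :=
      (A.map (constantCoeff (R := k))).map (algebraMap k kb)
    let S : Set kb := {μ | A₀.charpoly.IsRoot μ}
    let S₀ : Set kb := {β ∈ S |
      (∃ α ∈ S, ∃ n : ℕ, 0 < n ∧ β - α = (n : kb)) ∧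
      (∀ γ ∈ S, ∀ n : ℕ, 0 < n → γ - β ≠ (n : kb))}
    ∀ (hV : ∀ x : Fin r → kb,
        (x ∈ ⨆ β ∈ S₀, Module.End.maxGenEigenspace (Matrix.toLin' A₀) β) ↔
        (∀ i : Fin r, m ≤ (i : ℕ) → x i = 0))
      (ρ : ℕ) (hρpos : 0 < ρ)
      (hρbound : ∀ α ∈ S, ∀ β ∈ S, ∀ n : ℕ, β - α = (n : kb) → n ≤ ρ)
      (hρmax : ∃ α ∈ S, ∃ β ∈ S, β - α = (ρ : kb)),
    -- the connection matrix of the modified lattice `E⁽²⁾`, computed over `k((t))`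
    let tpow : Fin r → LaurentSeries k :=
      fun i => if (i : ℕ) < m then HahnSeries.single (1 : ℤ) 1 else 1
    let tpowinv : Fin r → LaurentSeries k :=
      fun i => if (i : ℕ) < m then HahnSeries.single (-1 : ℤ) 1 else 1
    let A'L : Matrix (Fin r) (Fin r) (LaurentSeries k) :=
      fun i j => tpow i * (HahnSeries.ofPowerSeries ℤ k (A i j)) * tpowinv j
        + (if i = j ∧ (i : ℕ) < m then -1 else 0)
    ∃ A' : Matrix (Fin r) (Fin r) (PowerSeries k),
      A'.map (HahnSeries.ofPowerSeries ℤ k) = A'L ∧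
      (∀ α β : AlgebraicClosure k,
        (((A'.map (constantCoeff (R := k))).map (algebraMap k (AlgebraicClosure k))).charpoly.IsRoot α) →
        (((A'.map (constantCoeff (R := k))).map (algebraMap k (AlgebraicClosure k))).charpoly.IsRoot β) →
        ∀ n : ℕ, 0 < n → β - α = (n : AlgebraicClosure k) → (n : ℤ) ≤ (ρ : ℤ) - 1) := by
  intro kb A₀ S S₀ hV ρ hρpos hρbound hρmax tpow tpowinv A'L
  -- basic setup
  set f := Matrix.toLin' A₀ with hfdef
  set V := ⨆ β ∈ S₀, Module.End.maxGenEigenspace f β with hVdef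
  have n₂eq : m + (r - m) = r := Nat.add_sub_cancel' hm
  set e : Fin m ⊕ Fin (r - m) ≃ Fin r := finSumFinEquiv.trans (finCongr n₂eq) with hedef
  have hel : ∀ a : Fin m, ((e (Sum.inl a) : Fin r) : ℕ) = (a : ℕ) := by
    intro a; simp [hedef]
  have her : ∀ b : Fin (r - m), ((e (Sum.inr b) : Fin r) : ℕ) = m + (b : ℕ) := by
    intro b; simp [hedef]
  have hf : ∀ x : Fin r → kb, f x = A₀.mulVec x := fun x => Matrix.toLin'_apply A₀ x
  -- V is invariant under f
  have hfV : ∀ x ∈ V, f x ∈ V := by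
    intro x hx
    have h1 : ∀ β : kb, Submodule.map f (Module.End.maxGenEigenspace f β) ≤
        Module.End.maxGenEigenspace f β := by
      intro β
      rintro y ⟨z, hz, rfl⟩
      exact Module.End.mapsTo_maxGenEigenspace_of_comm rfl β hz
    have h2 : Submodule.map f V ≤ V := by
      rw [hVdef, Submodule.map_iSup]
      refine iSup_le fun β => ?_
      rw [Submodule.map_iSup]
      refine iSup_le fun hβ => ?_
      exact le_trans (h1 β) (le_iSup₂ (f := fun β (_ : β ∈ S₀) =>
        Module.End.maxGenEigenspace f β) β hβ)
    exact h2 ⟨x, hx, rfl⟩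
  -- the lower-left block of A₀ vanishes
  have key0 : ∀ i j : Fin r, m ≤ (i : ℕ) → (j : ℕ) < m → A₀ i j = 0 := by
    intro i j hi hj
    have hxV : (Pi.single j (1 : kb) : Fin r → kb) ∈ V := by
      refine (hV _).mpr fun i' hi' => ?_
      exact Pi.single_eq_of_ne (Fin.ne_of_val_ne (by omega)) _
    have h2 := (hV _).mp (hfV _ hxV) i hi
    rw [hf] at h2
    rw [Matrix.mulVec_single] at h2
    simpa using h2
  have key0k : ∀ i j : Fin r, m ≤ (i : ℕ) → (j : ℕ) < m → constantCoeff (A i j) = 0 := by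
    intro i j hi hj
    have h0 : A₀ i j = algebraMap k kb (constantCoeff (A i j)) := rfl
    have := key0 i j hi hj
    rw [h0] at this
    exact (algebraMap k kb).injective (by simpa using this)
  -- the new matrix
  set A' : Matrix (Fin r) (Fin r) (PowerSeries k) := Matrix.of fun i j =>
      if (i : ℕ) < m then
        (if (j : ℕ) < m then A i j - (if i = j then 1 else 0) else PowerSeries.X * A i j)
      else
        (if (j : ℕ) < m then PowerSeries.mk (fun n => PowerSeries.coeff (n + 1) (A i j))
         else A i j) with hA'def
  refine ⟨A', ?_, ?_⟩
  · refine Matrix.ext fun i j => ?_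
    show HahnSeries.ofPowerSeries ℤ k
        ((if (i : ℕ) < m then
          (if (j : ℕ) < m then A i j - (if i = j then 1 else 0) else PowerSeries.X * A i j)
        else
          (if (j : ℕ) < m then PowerSeries.mk (fun n => PowerSeries.coeff (n + 1) (A i j))
           else A i j))) =
      (if (i : ℕ) < m then HahnSeries.single (1 : ℤ) 1 else 1) *
        (HahnSeries.ofPowerSeries ℤ k (A i j)) *
        (if (j : ℕ) < m then HahnSeries.single (-1 : ℤ) 1 else 1)
      + (if i = j ∧ (i : ℕ) < m then -1 else 0)
    have hs : (HahnSeries.single (1 : ℤ) (1 : k)) * HahnSeries.single (-1 : ℤ) 1 = 1 := by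
      rw [HahnSeries.single_mul_single, one_mul, add_neg_cancel, HahnSeries.single_zero_one]
    by_cases hi : (i : ℕ) < m <;> by_cases hj : (j : ℕ) < m
    · rw [if_pos hi, if_pos hj, if_pos hi, if_pos hj]
      have hflip : HahnSeries.single (1:ℤ) (1:k) * HahnSeries.ofPowerSeries ℤ k (A i j) *
          HahnSeries.single (-1:ℤ) 1 = HahnSeries.ofPowerSeries ℤ k (A i j) := by
        rw [mul_comm (HahnSeries.single (1:ℤ) (1:k)), mul_assoc, hs, mul_one]
      rw [hflip, map_sub]
      by_cases hij : i = j
      · rw [if_pos hij, if_pos ⟨hij, hi⟩, map_one, sub_eq_add_neg]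
      · rw [if_neg hij, if_neg (by tauto), map_zero, sub_zero, add_zero]
    · rw [if_pos hi, if_neg hj, if_pos hi, if_neg hj,
        if_neg (by rintro ⟨rfl, -⟩; exact hj hi), map_mul, HahnSeries.ofPowerSeries_X,
        mul_one, add_zero]
    · rw [if_neg hi, if_pos hj, if_neg hi, if_pos hj,
        if_neg (by rintro ⟨rfl, h⟩; exact hi h), one_mul, add_zero]
      have hXg : (PowerSeries.X : PowerSeries k) *
          PowerSeries.mk (fun n => PowerSeries.coeff (n + 1) (A i j)) = A i j := by
        ext n
        cases n with
        | zero =>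
          simp [PowerSeries.coeff_zero_eq_constantCoeff, map_mul, PowerSeries.constantCoeff_X,
            key0k i j (le_of_not_gt hi) hj]
        | succ n' => rw [PowerSeries.coeff_succ_X_mul, PowerSeries.coeff_mk]
      have h1 : HahnSeries.ofPowerSeries ℤ k (A i j) = HahnSeries.single (1:ℤ) 1 *
          HahnSeries.ofPowerSeries ℤ k
            (PowerSeries.mk fun n => PowerSeries.coeff (n+1) (A i j)) := by
        rw [← HahnSeries.ofPowerSeries_X, ← map_mul, hXg]
      rw [h1, mul_comm (HahnSeries.single (1:ℤ) (1:k)), mul_assoc, hs, mul_one]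
    · rw [if_neg hi, if_neg hj, if_neg hi, if_neg hj,
        if_neg (by rintro ⟨rfl, h⟩; exact hi h), one_mul, mul_one, add_zero]
  · -- the spectral bound
    intro α β hα hβ n hn hdiff
    set B₀ : Matrix (Fin r) (Fin r) kb := (A'.map (constantCoeff (R := k))).map (algebraMap k kb)
      with hB₀def
    have hα' : B₀.charpoly.IsRoot α := hα
    have hβ' : B₀.charpoly.IsRoot β := hβ
    have hB11 : ∀ i j : Fin r, (i : ℕ) < m → (j : ℕ) < m →
        B₀ i j = A₀ i j - (if i = j then 1 else 0) := by
      intro i j hi hj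
      have h1 : B₀ i j = algebraMap k kb (constantCoeff (A' i j)) := rfl
      have h2 : A₀ i j = algebraMap k kb (constantCoeff (A i j)) := rfl
      rw [h1, h2, hA'def]
      by_cases hij : i = j <;> simp [hij, hi, hj, map_sub]
    have hB12 : ∀ i j : Fin r, (i : ℕ) < m → m ≤ (j : ℕ) → B₀ i j = 0 := by
      intro i j hi hj
      have h1 : B₀ i j = algebraMap k kb (constantCoeff (A' i j)) := rfl
      rw [h1, hA'def]
      simp [hi, not_lt.mpr hj, map_mul, PowerSeries.constantCoeff_X]
    have hB22 : ∀ i j : Fin r, m ≤ (i : ℕ) → m ≤ (j : ℕ) → B₀ i j = A₀ i j := by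
      intro i j hi hj
      have h1 : B₀ i j = algebraMap k kb (constantCoeff (A' i j)) := rfl
      have h2 : A₀ i j = algebraMap k kb (constantCoeff (A i j)) := rfl
      rw [h1, h2, hA'def]
      simp [not_lt.mpr hi, not_lt.mpr hj]
    -- an eigenvector of the upper-left block gives an eigenvalue in S₀
    have hupper : ∀ (μ : kb) (x : Fin m → kb), x ≠ 0 →
        (∀ a, (∑ a', A₀ (e (Sum.inl a)) (e (Sum.inl a')) * x a') = μ * x a) → μ ∈ S₀ := by
      intro μ x hx hev
      set Xv : Fin r → kb := fun i0 => Sum.elim x (fun _ => (0:kb)) (e.symm i0) with hXvdef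
      have hXl : ∀ a, Xv (e (Sum.inl a)) = x a := by intro a; simp [hXvdef]
      have hXr : ∀ b, Xv (e (Sum.inr b)) = 0 := by intro b; simp [hXvdef]
      have hXsupp : ∀ i : Fin r, m ≤ (i : ℕ) → Xv i = 0 := by
        intro i hi
        obtain ⟨s, rfl⟩ := e.surjective i
        cases s with
        | inl a => exact absurd ((hel a) ▸ hi) (not_le.mpr a.isLt)
        | inr b => exact hXr b
      have hsum : ∀ i, (A₀.mulVec Xv) i = ∑ a, A₀ i (e (Sum.inl a)) * x a := by
        intro i
        show (∑ j, A₀ i j * Xv j) = _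
        rw [← Equiv.sum_comp e (fun j => A₀ i j * Xv j), Fintype.sum_sum_type]
        simp [hXl, hXr]
      have hXev : A₀.mulVec Xv = μ • Xv := by
        funext i
        obtain ⟨s, rfl⟩ := e.surjective i
        cases s with
        | inl a =>
          rw [hsum, hev a]
          simp [hXl]
        | inr b =>
          rw [hsum]
          have hzz : ∀ a, A₀ (e (Sum.inr b)) (e (Sum.inl a)) = 0 := fun a =>
            key0 _ _ (by rw [her]; exact Nat.le_add_right m b) (by rw [hel]; exact a.isLt)
          simp [hzz, hXr]
      have hXne : Xv ≠ 0 := by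
        obtain ⟨a, ha⟩ := Function.ne_iff.mp hx
        intro h0
        exact ha (by rw [← hXl a, h0]; rfl)
      have hXmem : Xv ∈ Module.End.maxGenEigenspace f μ := by
        rw [Module.End.mem_maxGenEigenspace]
        refine ⟨1, ?_⟩
        rw [pow_one]
        show f Xv - μ • Xv = 0
        rw [hf, hXev, sub_self]
      by_contra hnot
      have hdisj := (Module.End.independent_maxGenEigenspace f) (i := μ)
      have hle : V ≤ ⨆ β' ≠ μ, Module.End.maxGenEigenspace f β' := by
        refine iSup₂_le fun β' hβ' => ?_
        exact le_iSup₂ (f := fun β' (_ : β' ≠ μ) => Module.End.maxGenEigenspace f β') β'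
          (fun h => hnot (h ▸ hβ'))
      have hXV : Xv ∈ V := (hV Xv).mpr hXsupp
      exact hXne (Submodule.disjoint_def.mp hdisj Xv hXmem (hle hXV))
    -- a left eigenvector of the lower-right block gives an eigenvalue in S \\ S₀
    have hlower : ∀ (μ : kb) (w : Fin (r - m) → kb), w ≠ 0 →
        (∀ b', (∑ b, w b * A₀ (e (Sum.inr b)) (e (Sum.inr b'))) = μ * w b') →
        μ ∈ S ∧ μ ∉ S₀ := by
      intro μ w hw hev
      set Yv : Fin r → kb := fun i0 => Sum.elim (fun _ => (0:kb)) w (e.symm i0) with hYvdef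
      have hYl : ∀ a, Yv (e (Sum.inl a)) = 0 := by intro a; simp [hYvdef]
      have hYr : ∀ b, Yv (e (Sum.inr b)) = w b := by intro b; simp [hYvdef]
      have hYsum : ∀ g : Fin r → kb, (∑ i, Yv i * g i) = ∑ b, w b * g (e (Sum.inr b)) := by
        intro g
        rw [← Equiv.sum_comp e (fun i => Yv i * g i), Fintype.sum_sum_type]
        simp [hYl, hYr]
      have hYA : ∀ j, (∑ i, Yv i * A₀ i j) = μ * Yv j := by
        intro j
        rw [hYsum (fun i => A₀ i j)]
        obtain ⟨s, rfl⟩ := e.surjective j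
        cases s with
        | inl a =>
          have hzz : ∀ b, A₀ (e (Sum.inr b)) (e (Sum.inl a)) = 0 := fun b =>
            key0 _ _ (by rw [her]; exact Nat.le_add_right m b) (by rw [hel]; exact a.isLt)
          simp [hzz, hYl]
        | inr b' => rw [hev b', hYr]
      have hYne : Yv ≠ 0 := by
        obtain ⟨b, hb⟩ := Function.ne_iff.mp hw
        intro h0
        exact hb (by rw [← hYr b, h0]; rfl)
      constructor
      · show A₀.charpoly.IsRoot μ
        rw [isRoot_charpoly_iff_det, ← Matrix.det_transpose, ← Matrix.exists_mulVec_eq_zero_iff]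
        refine ⟨Yv, hYne, ?_⟩
        funext j
        simp only [Matrix.mulVec, dotProduct, Pi.zero_apply]
        have hentry : ∀ i, (Matrix.diagonal (fun _ : Fin r => μ) - A₀).transpose j i =
            (if i = j then μ else 0) - A₀ i j := by
          intro i
          by_cases hij : i = j <;>
            simp [Matrix.transpose_apply, Matrix.sub_apply, Matrix.diagonal_apply, hij,
              eq_comm]
        simp only [hentry, sub_mul]
        rw [Finset.sum_sub_distrib]
        have h1 : (∑ i, (if i = j then μ else 0) * Yv i) = μ * Yv j := by
          simp [ite_mul, Finset.sum_ite_eq']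
        have h2 : (∑ i, A₀ i j * Yv i) = μ * Yv j := by
          rw [← hYA j]
          exact Finset.sum_congr rfl fun i _ => mul_comm _ _
        rw [h1, h2, sub_self]
      · intro hμ0
        obtain ⟨φlin, hφ⟩ : ∃ φ : (Fin r → kb) →ₗ[kb] kb, ∀ z, φ z = ∑ i, Yv i * z i :=
          ⟨{ toFun := fun z => ∑ i, Yv i * z i
             map_add' := by intro z1 z2; simp [mul_add, Finset.sum_add_distrib]
             map_smul' := by
               intro c z
               simp [Finset.mul_sum, smul_eq_mul, mul_left_comm]
               rw [Finset.mul_sum] }, fun z => rfl⟩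
        have hker : ∀ β' : kb, Module.End.maxGenEigenspace f β' ≤ LinearMap.ker φlin := by
          intro β' z hz
          rw [LinearMap.mem_ker]
          by_cases hβμ : β' = μ
          · subst hβμ
            have hzV : z ∈ V := (le_iSup₂ (f := fun b (_ : b ∈ S₀) =>
                Module.End.maxGenEigenspace f b) β' hμ0) hz
            have hz0 := (hV z).mp hzV
            rw [hφ, hYsum]
            refine Finset.sum_eq_zero fun b _ => ?_
            rw [hz0 _ (by rw [her]; exact Nat.le_add_right m b), mul_zero]
          · obtain ⟨N, hN⟩ := (Module.End.mem_maxGenEigenspace f β' z).mp hz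
            have hstep : ∀ z' : Fin r → kb,
                φlin ((f - β' • 1) z') = (μ - β') * φlin z' := by
              intro z'
              have h1 : ((f - β' • (1 : Module.End kb (Fin r → kb))) z') =
                  fun i0 => (∑ j, A₀ i0 j * z' j) - β' * z' i0 := by
                funext i0
                show f z' i0 - (β' • z') i0 = _
                rw [hf]
                rfl
              rw [hφ, hφ]
              simp only [h1]
              have h2 : ∀ i, Yv i * ((∑ j, A₀ i j * z' j) - β' * z' i)
                  = (∑ j, (Yv i * A₀ i j) * z' j) - β' * (Yv i * z' i) := by
                intro i
                rw [mul_sub, Finset.mul_sum]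
                congr 1
                · exact Finset.sum_congr rfl fun j _ => by ring
                · ring
              rw [Finset.sum_congr rfl fun i _ => h2 i, Finset.sum_sub_distrib]
              have h3 : (∑ i, ∑ j, (Yv i * A₀ i j) * z' j) = μ * ∑ i, Yv i * z' i := by
                rw [Finset.sum_comm]
                have h4 : ∀ j, (∑ i, (Yv i * A₀ i j) * z' j) = μ * (Yv j * z' j) := by
                  intro j
                  rw [← Finset.sum_mul, hYA j, mul_assoc]
                rw [Finset.sum_congr rfl fun j _ => h4 j, ← Finset.mul_sum]
              rw [h3, ← Finset.mul_sum, sub_mul]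
            have hpow : ∀ (N' : ℕ) (z' : Fin r → kb),
                φlin (((f - β' • 1) ^ N') z') = (μ - β') ^ N' * φlin z' := by
              intro N'
              induction N' with
              | zero => intro z'; simp
              | succ N' ih =>
                intro z'
                rw [pow_succ, pow_succ]
                have h5 : ((f - β' • 1) ^ N' * (f - β' • 1)) z' =
                    ((f - β' • 1) ^ N') ((f - β' • 1) z') := rfl
                rw [h5, ih, hstep]
                ring
            have h0 := hpow N z
            rw [hN, map_zero] at h0
            have hne0 : (μ - β') ^ N ≠ 0 := pow_ne_zero _ (sub_ne_zero.mpr (Ne.symm hβμ))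
            exact ((mul_eq_zero.mp h0.symm).resolve_left hne0)
        have htop : (⊤ : Submodule kb (Fin r → kb)) ≤ LinearMap.ker φlin := by
          rw [← Module.End.iSup_maxGenEigenspace_eq_top f]
          exact iSup_le hker
        have hY0 : Yv = 0 := by
          funext i
          have hmem := htop (Submodule.mem_top : (Pi.single i 1 : Fin r → kb) ∈ ⊤)
          rw [LinearMap.mem_ker] at hmem
          have h5 : φlin (Pi.single i 1) = Yv i := by
            rw [hφ, Finset.sum_eq_single i]
            · simp
            · intro b _ hb; simp [Pi.single_eq_of_ne hb]
            · intro h; exact absurd (Finset.mem_univ i) h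
          rw [h5] at hmem
          exact hmem
        exact hYne hY0
    -- root classification for B₀
    have hclass : ∀ μ : kb, B₀.charpoly.IsRoot μ → ((μ + 1) ∈ S₀ ∨ (μ ∈ S ∧ μ ∉ S₀)) := by
      intro μ hroot
      rw [isRoot_charpoly_iff_det] at hroot
      have hz : ∀ a b, (Matrix.diagonal (fun _ : Fin r => μ) - B₀)
          (e (Sum.inl a)) (e (Sum.inr b)) = 0 := by
        intro a b
        have hne : e (Sum.inl a) ≠ e (Sum.inr b) := by
          intro h; exact absurd (e.injective h) (by simp)
        rw [Matrix.sub_apply, Matrix.diagonal_apply_ne _ hne,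
          hB12 _ _ (by rw [hel]; exact a.isLt) (by rw [her]; exact Nat.le_add_right m b),
          sub_zero]
      rw [det_split_blocks e _ hz] at hroot
      rcases mul_eq_zero.mp hroot with htop | hbot
      · left
        have hTeq : (Matrix.of fun a a' => (Matrix.diagonal (fun _ : Fin r => μ) - B₀)
              (e (Sum.inl a)) (e (Sum.inl a'))) =
            Matrix.diagonal (fun _ => μ + 1) -
              Matrix.of (fun a a' => A₀ (e (Sum.inl a)) (e (Sum.inl a'))) := by
          ext a a'
          by_cases haa : a = a'
          · subst haa
            rw [Matrix.of_apply, Matrix.sub_apply, Matrix.diagonal_apply_eq,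
              hB11 _ _ (by rw [hel]; exact a.isLt) (by rw [hel]; exact a.isLt), if_pos rfl,
              Matrix.sub_apply, Matrix.diagonal_apply_eq, Matrix.of_apply]
            ring
          · have hne : e (Sum.inl a) ≠ e (Sum.inl a') := fun h => haa (by simpa using e.injective h)
            rw [Matrix.of_apply, Matrix.sub_apply, Matrix.diagonal_apply_ne _ hne,
              hB11 _ _ (by rw [hel]; exact a.isLt) (by rw [hel]; exact a'.isLt), if_neg hne,
              Matrix.sub_apply, Matrix.diagonal_apply_ne _ haa, Matrix.of_apply]
            ring
        rw [hTeq] at htop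
        have hroot2 : (Matrix.of (fun a a' => A₀ (e (Sum.inl a)) (e (Sum.inl a')))).charpoly.IsRoot
            (μ + 1) := (isRoot_charpoly_iff_det _ _).mpr htop
        obtain ⟨x, hx, hxe⟩ := (isRoot_charpoly_iff_exists_mulVec _ _).mp hroot2
        refine hupper (μ + 1) x hx fun a => ?_
        have hcf := congrFun hxe a
        simpa [Matrix.mulVec, dotProduct, Matrix.of_apply] using hcf
      · right
        have hDeq : (Matrix.of fun b b' => (Matrix.diagonal (fun _ : Fin r => μ) - B₀)
              (e (Sum.inr b)) (e (Sum.inr b'))) =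
            Matrix.diagonal (fun _ => μ) -
              Matrix.of (fun b b' => A₀ (e (Sum.inr b)) (e (Sum.inr b'))) := by
          ext b b'
          by_cases hbb : b = b'
          · subst hbb
            rw [Matrix.of_apply, Matrix.sub_apply, Matrix.diagonal_apply_eq,
              hB22 _ _ (by rw [her]; exact Nat.le_add_right m b)
                (by rw [her]; exact Nat.le_add_right m b),
              Matrix.sub_apply, Matrix.diagonal_apply_eq, Matrix.of_apply]
          · have hne : e (Sum.inr b) ≠ e (Sum.inr b') := fun h => hbb (by simpa using e.injective h)
            rw [Matrix.of_apply, Matrix.sub_apply, Matrix.diagonal_apply_ne _ hne,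
              hB22 _ _ (by rw [her]; exact Nat.le_add_right m b)
                (by rw [her]; exact Nat.le_add_right m b'),
              Matrix.sub_apply, Matrix.diagonal_apply_ne _ hbb, Matrix.of_apply]
        rw [hDeq] at hbot
        have hdt : ((Matrix.diagonal (fun _ : Fin (r - m) => μ) -
            Matrix.of (fun b b' => A₀ (e (Sum.inr b)) (e (Sum.inr b')))).transpose).det = 0 := by
          rw [Matrix.det_transpose]; exact hbot
        rw [Matrix.transpose_sub, Matrix.diagonal_transpose] at hdt
        have hroot2 : ((Matrix.of (fun b b' =>
            A₀ (e (Sum.inr b)) (e (Sum.inr b')))).transpose).charpoly.IsRoot μ :=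
          (isRoot_charpoly_iff_det _ _).mpr hdt
        obtain ⟨w, hw, hwe⟩ := (isRoot_charpoly_iff_exists_mulVec _ _).mp hroot2
        refine hlower μ w hw fun b' => ?_
        have hcf := congrFun hwe b'
        simp only [Matrix.mulVec, dotProduct, Matrix.transpose_apply, Matrix.of_apply,
          Pi.smul_apply, smul_eq_mul] at hcf
        rw [← hcf]
        exact Finset.sum_congr rfl fun b _ => mul_comm _ _
    -- final case analysis
    have hcα := hclass α hα'
    have hcβ := hclass β hβ'
    have hmaxS₀ : ∀ δ, δ ∈ S₀ → ∀ γ, γ ∈ S → ∀ p : ℕ, 0 < p → γ - δ ≠ (p : kb) :=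
      fun δ hδ => hδ.2.2
    have hS₀S : ∀ δ, δ ∈ S₀ → δ ∈ S := fun δ hδ => hδ.1
    rcases hcα with hα1 | ⟨hαS, hαn⟩
    · exfalso
      rcases hcβ with hβ1 | ⟨hβS, hβn⟩
      · exact hmaxS₀ (α+1) hα1 (β+1) (hS₀S _ hβ1) n hn
          (by rw [show (β+1)-(α+1) = β - α by ring, hdiff])
      · rcases Nat.lt_or_ge 1 n with h1 | h1
        · refine hmaxS₀ (α+1) hα1 β hβS (n-1) (by omega) ?_
          have hc : ((n - 1 : ℕ) : kb) = (n : kb) - 1 := by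
            have h2 : (1:ℕ) ≤ n := by omega
            push_cast [h2]
            ring
          rw [hc, ← hdiff]
          ring
        · have hn1 : n = 1 := by omega
          have hba : β = α + 1 := by
            rw [hn1] at hdiff
            push_cast at hdiff
            linear_combination hdiff
          exact hβn (hba ▸ hα1)
    · rcases hcβ with hβ1 | ⟨hβS, hβn⟩
      · have hb := hρbound α hαS (β+1) (hS₀S _ hβ1) (n+1)
          (by push_cast; rw [show (β+1) - α = (β - α) + 1 by ring, hdiff])
        omega
      · have hle := hρbound α hαS β hβS n hdiff
        have hneρ : n ≠ ρ := by
          intro hnρ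
          apply hβn
          refine ⟨hβS, ⟨α, hαS, n, hn, hdiff⟩, ?_⟩
          intro γ hγ p hp hc
          have hsum : γ - α = ((p + n : ℕ) : kb) := by
            push_cast
            rw [show γ - α = (γ - β) + (β - α) by ring, hc, hdiff]
          have := hρbound α hαS γ hγ (p + n) hsum
          omega
        omega
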